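/- Suppose f ∈ V is nonzero and 𝓛f = λf. Then |λ| ≤ 1. (Idea: f is bounded as ±B/(x(1+y)) and 𝓛 preserves these bounds since 1/(x(1+y)) is a fixed point, so λⁿ f stays bounded, forcing |λ| ≤ 1.) -/

import Mathlib

open Filter Topology

/-- Δ = {(x,y) : 0 < y < x < 1} -/
def TriDelta : Set (ℝ × ℝ) := {p | 0 < p.2 ∧ p.2 < p.1 ∧ p.1 < 1}

/-- The transfer operator of the triangle map. -/
noncomputable def TransferOp (f : ℝ × ℝ → ℝ) (p : ℝ × ℝ) : ℝ :=
  ∑' n : ℕ, (1 / (1 + n * p.1 + p.2) ^ 3) *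
    f (1 / (1 + n * p.1 + p.2), p.1 / (1 + n * p.1 + p.2))

lemma telescope_hasSum (x y : ℝ) (hx : 0 < x) (hy : 0 < y) :
    HasSum (fun n : ℕ => 1 / ((1 + n * x + y) * (1 + (n + 1 : ℕ) * x + y)))
      (1 / (x * (1 + y))) := by
  have hd : ∀ n : ℕ, (0:ℝ) < 1 + n * x + y := fun n => by positivity
  have hterm : ∀ n : ℕ, 1 / ((1 + n * x + y) * (1 + (n + 1 : ℕ) * x + y))
      = (1/x) * (1 / (1 + n * x + y) - 1 / (1 + (n + 1 : ℕ) * x + y)) := by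
    intro n
    have h1 := (hd n).ne'
    have h2 := (hd (n+1)).ne'
    push_cast at h2 ⊢
    field_simp
    ring
  rw [hasSum_iff_tendsto_nat_of_nonneg (fun n => by positivity)]
  have hsum : ∀ N : ℕ, ∑ n ∈ Finset.range N, (1 / ((1 + n * x + y) * (1 + (n + 1 : ℕ) * x + y)))
      = (1/x) * (1 / (1 + (0:ℕ) * x + y) - 1 / (1 + N * x + y)) := by
    intro N
    rw [Finset.sum_congr rfl (fun n _ => hterm n), ← Finset.mul_sum,
      Finset.sum_range_sub' (fun n : ℕ => 1 / (1 + n * x + y))]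
  simp only [hsum]
  have hlim : Tendsto (fun N : ℕ => 1 / (1 + (N:ℝ) * x + y)) atTop (𝓝 0) := by
    have hb : Tendsto (fun N : ℕ => 1 + (N:ℝ) * x + y) atTop atTop := by
      apply tendsto_atTop_add_const_right
      apply tendsto_atTop_add_const_left
      exact Tendsto.atTop_mul_const hx tendsto_natCast_atTop_atTop
    simpa [one_div, Function.comp_def] using tendsto_inv_atTop_zero.comp hb
  have h2 := ((tendsto_const_nhds (x := (1 / (1 + ((0:ℕ):ℝ) * x + y)))).sub hlim).const_mul (1/x)
  convert h2 using 2
  have h0 : (1:ℝ) + (0:ℕ) * x + y = 1 + y := by push_cast; ring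
  rw [h0]
  have : (0:ℝ) < 1 + y := by positivity
  field_simp
  ring

/-- The coefficient times the fixed-point function at the image point telescopes. -/
lemma coef_phi_eq (x y : ℝ) (hx : 0 < x) (hy : 0 < y) (n : ℕ) :
    (1 / (1 + n * x + y) ^ 3) *
      (1 / ((1 / (1 + n * x + y)) * (1 + x / (1 + n * x + y))))
    = 1 / ((1 + n * x + y) * (1 + (n + 1 : ℕ) * x + y)) := by
  have hd : (0:ℝ) < 1 + n * x + y := by positivity
  have hd2 : (0:ℝ) < 1 + n * x + y + x := by positivity
  have he : (1:ℝ) + (n + 1 : ℕ) * x + y = 1 + n * x + y + x := by push_cast; ring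
  rw [he]
  field_simp

/-- An eigenvalue of the transfer operator on V has absolute value at most 1. -/
theorem stmt7 (f : ℝ × ℝ → ℝ) (lam : ℝ)
    (hf : ContinuousOn f TriDelta)
    (hbdd : ∃ C : ℝ, ∀ p ∈ TriDelta, |p.1 * f p| ≤ C)
    (hne : ∃ p ∈ TriDelta, f p ≠ 0)
    (heig : ∀ p ∈ TriDelta, TransferOp f p = lam * f p) :
    |lam| ≤ 1 := by
  by_contra hcon
  push_neg at hcon
  obtain ⟨C, hC⟩ := hbdd
  obtain ⟨p₀, hp₀, hfp₀⟩ := hne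
  have hCnn : 0 ≤ C := le_trans (abs_nonneg _) (hC p₀ hp₀)
  -- pointwise bound |f| ≤ 2C / (x(1+y))
  have hfb : ∀ p ∈ TriDelta, |f p| ≤ (2*C) * (1 / (p.1 * (1 + p.2))) := by
    intro p hp
    obtain ⟨hy, hyx, hx1⟩ := hp
    have hx : 0 < p.1 := lt_trans hy hyx
    have hy1 : p.2 < 1 := lt_trans hyx hx1
    have h1 : |f p| ≤ C / p.1 := by
      rw [le_div_iff₀ hx]
      calc |f p| * p.1 = |p.1 * f p| := by rw [abs_mul, abs_of_pos hx]; ring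
        _ ≤ C := hC p ⟨hy, hyx, hx1⟩
    refine h1.trans ?_
    rw [mul_one_div, div_le_div_iff₀ hx (by positivity)]
    nlinarith [mul_nonneg hCnn hx.le]
  -- images stay in the triangle
  have hqmem : ∀ p ∈ TriDelta, ∀ n : ℕ,
      ((1 / (1 + n * p.1 + p.2) : ℝ), (p.1 / (1 + n * p.1 + p.2) : ℝ)) ∈ TriDelta := by
    intro p hp n
    obtain ⟨hy, hyx, hx1⟩ := hp
    have hx : 0 < p.1 := lt_trans hy hyx
    have hd : (0:ℝ) < 1 + n * p.1 + p.2 := by positivity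
    have hd1 : (1:ℝ) < 1 + n * p.1 + p.2 := by
      have : (0:ℝ) ≤ (n:ℝ) * p.1 := by positivity
      linarith
    refine ⟨by positivity, (div_lt_div_iff_of_pos_right hd).mpr hx1, ?_⟩
    rw [div_lt_one hd]
    exact hd1
  have hlam1 : (0:ℝ) < |lam| := lt_trans one_pos hcon
  -- key induction
  have key : ∀ n : ℕ, ∀ p ∈ TriDelta, |lam|^n * |f p| ≤ (2*C) * (1 / (p.1 * (1 + p.2))) := by
    intro n
    induction n with
    | zero => intro p hp; simpa using hfb p hp
    | succ n ih =>
      intro p hp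
      obtain ⟨hy, hyx, hx1⟩ := hp
      have hx : 0 < p.1 := lt_trans hy hyx
      have hd : ∀ k : ℕ, (0:ℝ) < 1 + k * p.1 + p.2 := fun k => by positivity
      have hlamn : (0:ℝ) < |lam|^n := pow_pos hlam1 n
      set g : ℕ → ℝ := fun k => (1 / (1 + k * p.1 + p.2) ^ 3) *
        |f (1 / (1 + k * p.1 + p.2), p.1 / (1 + k * p.1 + p.2))| with hg
      set h : ℕ → ℝ := fun k => ((2*C) / |lam|^n) *
        (1 / ((1 + k * p.1 + p.2) * (1 + (k + 1 : ℕ) * p.1 + p.2))) with hh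
    -- g ≤ h termwise
      have hgh : ∀ k, g k ≤ h k := by
        intro k
        have hq := ih _ (hqmem p ⟨hy, hyx, hx1⟩ k)
        have hq' : |f (1 / (1 + k * p.1 + p.2), p.1 / (1 + k * p.1 + p.2))|
            ≤ ((2*C) / |lam|^n) *
              (1 / ((1 / (1 + k * p.1 + p.2)) * (1 + p.1 / (1 + k * p.1 + p.2)))) := by
          rw [div_mul_eq_mul_div, le_div_iff₀ hlamn, mul_comm]
          exact hq
        calc g k ≤ (1 / (1 + k * p.1 + p.2) ^ 3) * (((2*C) / |lam|^n) *
              (1 / ((1 / (1 + k * p.1 + p.2)) * (1 + p.1 / (1 + k * p.1 + p.2))))) := by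
              apply mul_le_mul_of_nonneg_left hq' (by positivity)
          _ = h k := by
              rw [hh, mul_comm ((2*C) / |lam|^n) _, ← mul_assoc, coef_phi_eq p.1 p.2 hx hy k]
              ring
      have hgnn : ∀ k, 0 ≤ g k := fun k => by positivity
      have hS : HasSum (fun k : ℕ => 1 / ((1 + k * p.1 + p.2) * (1 + (k + 1 : ℕ) * p.1 + p.2)))
          (1 / (p.1 * (1 + p.2))) := telescope_hasSum p.1 p.2 hx hy
      have hsummh : Summable h := hS.summable.mul_left _
      have hsummg : Summable g := hsummh.of_nonneg_of_le hgnn hgh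
      have htsum_h : ∑' k, h k = ((2*C) / |lam|^n) * (1 / (p.1 * (1 + p.2))) :=
        (hS.mul_left _).tsum_eq
      -- |TransferOp f p| ≤ ∑' g
      have habs : |TransferOp f p| ≤ ∑' k, g k := by
        have hnorm : ∀ k : ℕ, ‖(1 / (1 + k * p.1 + p.2) ^ 3) *
            f (1 / (1 + k * p.1 + p.2), p.1 / (1 + k * p.1 + p.2))‖ = g k := by
          intro k
          rw [Real.norm_eq_abs, abs_mul, abs_of_pos (by positivity : (0:ℝ) < 1 / (1 + k * p.1 + p.2) ^ 3)]
        rw [TransferOp, ← Real.norm_eq_abs]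
        calc ‖∑' k : ℕ, (1 / (1 + k * p.1 + p.2) ^ 3) *
              f (1 / (1 + k * p.1 + p.2), p.1 / (1 + k * p.1 + p.2))‖
            ≤ ∑' k : ℕ, ‖(1 / (1 + k * p.1 + p.2) ^ 3) *
              f (1 / (1 + k * p.1 + p.2), p.1 / (1 + k * p.1 + p.2))‖ := by
              apply norm_tsum_le_tsum_norm
              simpa only [hnorm] using hsummg
          _ = ∑' k, g k := by exact tsum_congr hnorm
      have hTle : |TransferOp f p| ≤ ((2*C) / |lam|^n) * (1 / (p.1 * (1 + p.2))) := by
        refine habs.trans ?_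
        rw [← htsum_h]
        exact Summable.tsum_le_tsum hgh hsummg hsummh
      have heq : |lam| * |f p| = |TransferOp f p| := by
        rw [heig p ⟨hy, hyx, hx1⟩, abs_mul]
      calc |lam|^(n+1) * |f p| = |lam|^n * (|lam| * |f p|) := by ring
        _ = |lam|^n * |TransferOp f p| := by rw [heq]
        _ ≤ |lam|^n * (((2*C) / |lam|^n) * (1 / (p.1 * (1 + p.2)))) := by
            exact mul_le_mul_of_nonneg_left hTle hlamn.le
        _ = (2*C) * (1 / (p.1 * (1 + p.2))) := by
            field_simp
  -- conclude
  have hfpos : 0 < |f p₀| := abs_pos.mpr hfp₀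
  set K := (2*C) * (1 / (p₀.1 * (1 + p₀.2))) with hK
  have hbound : ∀ n : ℕ, |lam|^n ≤ K / |f p₀| := by
    intro n
    rw [le_div_iff₀ hfpos]
    exact key n p₀ hp₀
  have htop := tendsto_pow_atTop_atTop_of_one_lt hcon
  obtain ⟨n, hn⟩ := (htop.eventually_gt_atTop (K / |f p₀|)).exists
  exact absurd (hbound n) (not_le.mpr hn)
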